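/- For real v with 0 < v < 1, the series L(v) := ∑_{h≥1} (−1)^{h−1} · v^h/(1 − v^h) converges, and (1 − v)·L(v) tends to log 2 as v → 1⁻. -/

import Mathlib

open Filter

open Real Finset

-- AM-GM: for 0 ≤ v ≤ 1, a+b ≤ 2c implies 2 v^c ≤ v^a + v^b
lemma aux_two_pow_le {v : ℝ} (h0 : 0 ≤ v) (h1 : v ≤ 1) {a b c : ℕ} (hc : a + b ≤ 2 * c) :
    2 * v ^ c ≤ v ^ a + v ^ b := by
  wlog hab : a ≤ b generalizing a b
  · rw [add_comm (v ^ a)]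
    exact this (by omega) (by omega)
  have hac : a ≤ c := by omega
  have e1 : v ^ b = v ^ a * v ^ (b - a) := by rw [← pow_add]; congr 1; omega
  have e2 : v ^ c = v ^ a * v ^ (c - a) := by rw [← pow_add]; congr 1; omega
  have h3 : (v ^ (c - a)) ^ 2 ≤ v ^ (b - a) := by
    rw [← pow_mul]
    exact pow_le_pow_of_le_one h0 h1 (by omega)
  have h4 : 0 ≤ v ^ a * (1 - v ^ (c - a)) ^ 2 := mul_nonneg (pow_nonneg h0 a) (sq_nonneg _)
  have h5 : v ^ a * (v ^ (c - a)) ^ 2 ≤ v ^ a * v ^ (b - a) :=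
    mul_le_mul_of_nonneg_left h3 (pow_nonneg h0 a)
  rw [e1, e2]
  nlinarith

lemma aux_sum_mul_sum_ge {v : ℝ} (h0 : 0 ≤ v) (h1 : v ≤ 1) (k : ℕ) :
    ((2 * k + 1) * (2 * k + 2) : ℝ) * v ^ (2 * k + 1) ≤
      (∑ i ∈ range (2 * k + 1), v ^ i) * (∑ j ∈ range (2 * k + 2), v ^ j) := by
  have hprod : (∑ i ∈ range (2 * k + 1), v ^ i) * (∑ j ∈ range (2 * k + 2), v ^ j)
      = ∑ i ∈ range (2 * k + 1), ∑ j ∈ range (2 * k + 2), v ^ (i + j) := by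
    rw [Finset.sum_mul_sum]
    simp [pow_add]
  have hrefl : (∑ i ∈ range (2 * k + 1), v ^ i) * (∑ j ∈ range (2 * k + 2), v ^ j)
      = ∑ i ∈ range (2 * k + 1), ∑ j ∈ range (2 * k + 2), v ^ ((2 * k - i) + (2 * k + 1 - j)) := by
    rw [hprod]
    conv_lhs => rw [← Finset.sum_range_reflect]
    refine Finset.sum_congr rfl fun i hi => ?_
    conv_lhs => rw [← Finset.sum_range_reflect]
    rfl
  have key : ∑ i ∈ range (2 * k + 1), ∑ j ∈ range (2 * k + 2),
      (2 * v ^ (2 * k + 1)) ≤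
      (∑ i ∈ range (2 * k + 1), ∑ j ∈ range (2 * k + 2), v ^ (i + j)) +
      (∑ i ∈ range (2 * k + 1), ∑ j ∈ range (2 * k + 2), v ^ ((2 * k - i) + (2 * k + 1 - j))) := by
    rw [← Finset.sum_add_distrib]
    refine Finset.sum_le_sum fun i hi => ?_
    rw [← Finset.sum_add_distrib]
    refine Finset.sum_le_sum fun j hj => ?_
    simp only [Finset.mem_range] at hi hj
    exact aux_two_pow_le h0 h1 (by omega)
  simp only [Finset.sum_const, Finset.card_range, nsmul_eq_mul] at key
  rw [hprod]
  rw [hprod] at hrefl  -- no-op; just keep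
  push_cast at key ⊢
  nlinarith [hrefl, hprod]

lemma aux_summable_bound : Summable (fun k : ℕ => 1 / ((2 * (k:ℝ) + 1) * (2 * k + 2))) := by
  have h2 : Summable (fun n : ℕ => 1 / ((n:ℝ) + 1) ^ 2) := by
    have := (summable_nat_add_iff 1).mpr (Real.summable_one_div_nat_pow.mpr one_lt_two)
    · exact this.congr fun n => by push_cast; ring_nf
  refine h2.of_nonneg_of_le (fun k => by positivity) fun k => ?_
  rw [div_le_div_iff₀ (by positivity) (by positivity)]
  nlinarith [sq_nonneg ((k:ℝ))]

lemma aux_hasSum_log_two : HasSum (fun k : ℕ => 1 / ((2 * (k:ℝ) + 1) * (2 * k + 2))) (Real.log 2) := by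
  rw [(aux_summable_bound).hasSum_iff_tendsto_nat]
  have hps : ∀ n : ℕ, ∑ k ∈ range n, 1 / ((2 * (k:ℝ) + 1) * (2 * k + 2))
      = (harmonic (2 * n) : ℝ) - harmonic n := by
    intro n
    induction n with
    | zero => simp
    | succ n ih =>
      have h2 : 2 * (n + 1) = (2 * n + 1) + 1 := by ring
      rw [Finset.sum_range_succ, ih, h2, harmonic_succ, harmonic_succ, harmonic_succ]
      push_cast
      have hn1 : (2 * (n:ℝ) + 1) ≠ 0 := by positivity
      have hn2 : (2 * (n:ℝ) + 2) ≠ 0 := by positivity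
      have hn3 : ((n:ℝ) + 1) ≠ 0 := by positivity
      field_simp
      ring
  simp_rw [hps]
  have hcomp : Tendsto (fun n : ℕ => 2 * n) atTop atTop :=
    tendsto_atTop_atTop.mpr fun b => ⟨b, fun a ha => by omega⟩
  have h1 := Real.tendsto_harmonic_sub_log.comp hcomp
  have h2 := Real.tendsto_harmonic_sub_log
  have h3 : Tendsto (fun n : ℕ => ((harmonic (2 * n) : ℝ) - log (2 * n))
      - ((harmonic n : ℝ) - log n) + log 2) atTop (nhds (Real.log 2)) := by
    have := (h1.sub h2).add_const (Real.log 2)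
    simpa using this
  refine h3.congr' ?_
  filter_upwards [eventually_ne_atTop 0] with n hn
  have hlog : Real.log (2 * n) = Real.log 2 + Real.log n := by
    rw [Real.log_mul two_ne_zero (Nat.cast_ne_zero.mpr hn)]
  push_cast
  rw [hlog]
  ring

noncomputable def auxG (v : ℝ) (k : ℕ) : ℝ :=
  (1 - v) ^ 2 * v ^ (2 * k + 1) / ((1 - v ^ (2 * k + 1)) * (1 - v ^ (2 * k + 2)))

noncomputable def auxPhi (k : ℕ) (v : ℝ) : ℝ :=
  v ^ (2 * k + 1) / ((∑ i ∈ range (2 * k + 1), v ^ i) * (∑ i ∈ range (2 * k + 2), v ^ i))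

lemma aux_geom (v : ℝ) (n : ℕ) : 1 - v ^ n = (1 - v) * ∑ i ∈ range n, v ^ i := by
  have := geom_sum_mul v n
  linarith [this]

lemma aux_pow_lt_one {v : ℝ} (h0 : 0 < v) (h1 : v < 1) {n : ℕ} (hn : n ≠ 0) : v ^ n < 1 :=
  pow_lt_one₀ h0.le h1 hn

lemma aux_summable {v : ℝ} (h0 : 0 < v) (h1 : v < 1) :
    Summable (fun h : ℕ => (-1 : ℝ) ^ h * v ^ (h + 1) / (1 - v ^ (h + 1))) := by
  refine Summable.of_norm_bounded (g := fun h : ℕ => (v / (1 - v)) * v ^ h)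
    ((summable_geometric_of_lt_one h0.le h1).mul_left _) fun h => ?_
  have hd : 1 - v ≤ 1 - v ^ (h + 1) := by
    have : v ^ (h + 1) ≤ v := by
      calc v ^ (h + 1) ≤ v ^ 1 := pow_le_pow_of_le_one h0.le h1.le (by omega)
      _ = v := pow_one v
    linarith
  have hdpos : 0 < 1 - v := by linarith
  have hdpos' : 0 < 1 - v ^ (h + 1) := lt_of_lt_of_le hdpos hd
  rw [Real.norm_eq_abs, abs_div, abs_mul, abs_pow, abs_neg, abs_one, one_pow, one_mul,
    abs_of_pos hdpos', abs_of_pos (pow_pos h0 (h + 1))]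
  rw [div_le_iff₀ hdpos']
  have h2 : v / (1 - v) * v ^ h * (1 - v ^ (h + 1)) ≥ v / (1 - v) * v ^ h * (1 - v) := by
    have : 0 ≤ v / (1 - v) * v ^ h := by positivity
    nlinarith
  have h3 : v / (1 - v) * v ^ h * (1 - v) = v ^ (h + 1) := by
    field_simp
    ring
  linarith

lemma aux_sum_pos {v : ℝ} (h0 : 0 < v) (n : ℕ) : 0 < ∑ i ∈ range (n + 1), v ^ i :=
  Finset.sum_pos (fun i _ => pow_pos h0 i) (by simp)

lemma aux_G_eq_phi {v : ℝ} (h0 : 0 < v) (h1 : v < 1) (k : ℕ) : auxG v k = auxPhi k v := by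
  have hv : 0 < 1 - v := by linarith
  have e1 : 1 - v ^ (2 * k + 1) = (1 - v) * ∑ i ∈ range (2 * k + 1), v ^ i := aux_geom v _
  have e2 : 1 - v ^ (2 * k + 2) = (1 - v) * ∑ i ∈ range (2 * k + 2), v ^ i := aux_geom v _
  have s1 : (0:ℝ) < ∑ i ∈ range (2 * k + 1), v ^ i := by
    have := aux_sum_pos h0 (2 * k); simpa using this
  have s2 : (0:ℝ) < ∑ i ∈ range (2 * k + 2), v ^ i := by
    have := aux_sum_pos h0 (2 * k + 1); simpa using this
  rw [auxG, auxPhi, e1, e2]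
  field_simp

lemma aux_G_bound {v : ℝ} (h0 : 0 < v) (h1 : v < 1) (k : ℕ) :
    ‖auxG v k‖ ≤ 1 / ((2 * (k:ℝ) + 1) * (2 * k + 2)) := by
  rw [aux_G_eq_phi h0 h1 k, auxPhi]
  have s1 : (0:ℝ) < ∑ i ∈ range (2 * k + 1), v ^ i := by
    have := aux_sum_pos h0 (2 * k); simpa using this
  have s2 : (0:ℝ) < ∑ i ∈ range (2 * k + 2), v ^ i := by
    have := aux_sum_pos h0 (2 * k + 1); simpa using this
  have hnn : 0 ≤ v ^ (2 * k + 1) / ((∑ i ∈ range (2 * k + 1), v ^ i) * (∑ i ∈ range (2 * k + 2), v ^ i)) := by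
    positivity
  rw [Real.norm_eq_abs, abs_of_nonneg hnn]
  rw [div_le_div_iff₀ (by positivity) (by positivity)]
  have := aux_sum_mul_sum_ge h0.le h1.le k
  push_cast at this ⊢
  nlinarith [this]

lemma aux_G_tendsto (k : ℕ) :
    Tendsto (fun v => auxG v k) (nhdsWithin 1 (Set.Ioo 0 1))
      (nhds (1 / ((2 * (k:ℝ) + 1) * (2 * k + 2)))) := by
  have hcont : ContinuousAt (auxPhi k) 1 := by
    apply ContinuousAt.div
    · exact (continuous_pow _).continuousAt
    · exact ContinuousAt.mul (Continuous.continuousAt (by continuity))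
        (Continuous.continuousAt (by continuity))
    · simp only [one_pow, Finset.sum_const, Finset.card_range, nsmul_eq_mul, mul_one]
      positivity
  have hval : auxPhi k 1 = 1 / ((2 * (k:ℝ) + 1) * (2 * k + 2)) := by
    simp [auxPhi]
  have h1 : Tendsto (auxPhi k) (nhdsWithin 1 (Set.Ioo 0 1))
      (nhds (1 / ((2 * (k:ℝ) + 1) * (2 * k + 2)))) := by
    rw [← hval]
    exact (hcont.continuousWithinAt).tendsto
  refine h1.congr' ?_
  filter_upwards [self_mem_nhdsWithin] with v hv
  exact (aux_G_eq_phi hv.1 hv.2 k).symm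

lemma aux_pairing {v : ℝ} (h0 : 0 < v) (h1 : v < 1) :
    (1 - v) * ∑' h : ℕ, (-1 : ℝ) ^ h * v ^ (h + 1) / (1 - v ^ (h + 1)) = ∑' k, auxG v k := by
  set f : ℕ → ℝ := fun h => (-1 : ℝ) ^ h * v ^ (h + 1) / (1 - v ^ (h + 1)) with hf
  have hs := aux_summable h0 h1
  have hE : Summable (fun k : ℕ => f (2 * k)) :=
    hs.comp_injective (fun a b hab => by omega)
  have hO : Summable (fun k : ℕ => f (2 * k + 1)) :=
    hs.comp_injective (fun a b hab => by omega)
  have hadd := (HasSum.even_add_odd hE.hasSum hO.hasSum).tsum_eq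
  rw [hadd, ← Summable.tsum_add hE hO, ← tsum_mul_left]
  refine tsum_congr fun k => ?_
  have d1 : 1 - v ^ (2 * k + 1) ≠ 0 := by
    have := aux_pow_lt_one h0 h1 (n := 2 * k + 1) (by omega); linarith
  have d2 : 1 - v ^ (2 * k + 2) ≠ 0 := by
    have := aux_pow_lt_one h0 h1 (n := 2 * k + 2) (by omega); linarith
  have hneg1 : (-1 : ℝ) ^ (2 * k) = 1 := by
    rw [pow_mul]; norm_num
  have hneg2 : (-1 : ℝ) ^ (2 * k + 1) = -1 := by
    rw [pow_succ, hneg1]; ring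
  have he1 : 2 * k + 1 + 1 = 2 * k + 2 := by omega
  simp only [hf, hneg1, hneg2, he1, auxG, one_mul]
  field_simp
  ring

theorem lambert_alternating_asymptotics :
    (∀ v : ℝ, 0 < v → v < 1 →
      Summable (fun h : ℕ => (-1 : ℝ) ^ h * v ^ (h + 1) / (1 - v ^ (h + 1)))) ∧
    Tendsto
      (fun v : ℝ => (1 - v) * ∑' h : ℕ, (-1 : ℝ) ^ h * v ^ (h + 1) / (1 - v ^ (h + 1)))
      (nhdsWithin 1 (Set.Ioo 0 1)) (nhds (Real.log 2)) := by
  refine ⟨fun v h0 h1 => aux_summable h0 h1, ?_⟩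
  have hbound : ∀ᶠ v in nhdsWithin 1 (Set.Ioo 0 1), ∀ k : ℕ,
      ‖auxG v k‖ ≤ 1 / ((2 * (k:ℝ) + 1) * (2 * k + 2)) := by
    filter_upwards [self_mem_nhdsWithin] with v hv k
    exact aux_G_bound hv.1 hv.2 k
  have hDCT := tendsto_tsum_of_dominated_convergence aux_summable_bound aux_G_tendsto hbound
  rw [aux_hasSum_log_two.tsum_eq] at hDCT
  refine hDCT.congr' ?_
  filter_upwards [self_mem_nhdsWithin] with v hv
  exact (aux_pairing hv.1 hv.2).symm
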